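/- Let (Ω,Σ,μ) be a finite measure space, 1 ≤ p ≤ ∞, (M,d) a metric space, S ⊆ M a countable subset, K ≥ 0, and T : S → L^p(μ) a map that is pointwise K-Lipschitz μ-a.e., i.e., for every x,y ∈ S, |T(x) − T(y)| ≤ K·d(x,y) holds μ-almost everywhere. Then there exists a map T̂ : M → L^p(μ) such that T̂(x) = T(x) for every x ∈ S and, for every x,y ∈ M, |T̂(x) − T̂(y)| ≤ K·d(x,y) holds μ-almost everywhere. -/

import Mathlib

open MeasureTheory
open scoped ENNReal NNReal

/-- Let `μ` be a finite measure, `1 ≤ p ≤ ∞`, `(M,d)` a metric space,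
`S ⊆ M` countable, `K ≥ 0`, and `T : S → L^p(μ)` pointwise `K`-Lipschitz `μ`-a.e.
Then `T` admits an extension `T̂ : M → L^p(μ)` that is pointwise `K`-Lipschitz `μ`-a.e. -/
theorem ae_pointwise_lipschitz_extension_Lp
    {Ω : Type*} [MeasurableSpace Ω] (μ : Measure Ω) [IsFiniteMeasure μ]
    (p : ℝ≥0∞) (hp : 1 ≤ p)
    {M : Type*} [MetricSpace M] (S : Set M) (hS : S.Countable)
    (K : ℝ) (hK : 0 ≤ K) (T : S → Lp ℝ p μ)
    (hT : ∀ x y : S, ∀ᵐ ω ∂μ, |T x ω - T y ω| ≤ K * dist (x : M) (y : M)) :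
    ∃ That : M → Lp ℝ p μ,
      (∀ x : S, That x = T x) ∧
      (∀ x y : M, ∀ᵐ ω ∂μ, |That x ω - That y ω| ≤ K * dist x y) := by
  classical
  rcases S.eq_empty_or_nonempty with hSe | hSne
  · refine ⟨fun _ => 0, ?_, ?_⟩
    · rintro ⟨x, hx⟩
      simp [hSe] at hx
    · intro x y
      filter_upwards [Lp.coeFn_zero ℝ p μ] with ω h0
      simp only [h0, Pi.zero_apply, sub_self, abs_zero]
      positivity
  · have hC : Countable S := hS.to_subtype
    haveI hNe : Nonempty S := hSne.to_subtype
    obtain ⟨s₀⟩ := id hNe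
    set N : Set Ω := toMeasurable μ (⋃ (s : S) (t : S),
        {ω | ¬ |T s ω - T t ω| ≤ K * dist (s : M) (t : M)}) with hN
    have hNmeas : MeasurableSet N := measurableSet_toMeasurable _ _
    have hNnull : μ N = 0 := by
      rw [hN, measure_toMeasurable]
      exact measure_iUnion_null fun s => measure_iUnion_null fun t => hT s t
    set f : S → Ω → ℝ := fun s ω => if ω ∈ N then 0 else T s ω with hf
    have hfmeas : ∀ s, Measurable (f s) := fun s =>
      Measurable.ite hNmeas measurable_const (Lp.stronglyMeasurable (T s)).measurable
    have hfae : ∀ s, f s =ᵐ[μ] T s := by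
      intro s
      filter_upwards [measure_eq_zero_iff_ae_notMem.mp hNnull] with ω hω
      simp [hf, hω]
    have hflip : ∀ s t : S, ∀ ω, |f s ω - f t ω| ≤ K * dist (s : M) (t : M) := by
      intro s t ω
      by_cases hω : ω ∈ N
      · simp only [hf, if_pos hω, sub_self, abs_zero]
        positivity
      · simp only [hf, if_neg hω]
        have h1 : ω ∉ ⋃ (s : S) (t : S),
            {ω | ¬ |T s ω - T t ω| ≤ K * dist (s : M) (t : M)} :=
          fun h => hω (subset_toMeasurable _ _ h)
        simp only [Set.mem_iUnion, Set.mem_setOf_eq, not_exists, not_not] at h1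
        exact h1 s t
    set g : M → Ω → ℝ := fun x ω => ⨅ s : S, (f s ω + K * dist x (s : M)) with hg
    have hbdd : ∀ x ω, BddBelow (Set.range fun s : S => f s ω + K * dist x (s : M)) := by
      intro x ω
      refine ⟨f s₀ ω - K * dist x (s₀ : M), ?_⟩
      rintro _ ⟨s, rfl⟩
      have h1 := (abs_le.mp (hflip s₀ s ω)).2
      have h2 : dist (s₀ : M) (s : M) ≤ dist x (s₀ : M) + dist x (s : M) := by
        rw [dist_comm x (s₀ : M)]; exact dist_triangle _ _ _
      have h3 : K * dist (s₀ : M) (s : M) ≤ K * (dist x (s₀ : M) + dist x (s : M)) :=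
        mul_le_mul_of_nonneg_left h2 hK
      dsimp only
      linarith
    have hglip1 : ∀ x y : M, ∀ ω, g x ω ≤ g y ω + K * dist x y := by
      intro x y ω
      have h : g x ω - K * dist x y ≤ g y ω := by
        refine le_ciInf fun s => ?_
        have h1 : g x ω ≤ f s ω + K * dist x (s : M) := ciInf_le (hbdd x ω) s
        have h2 : dist x (s : M) ≤ dist x y + dist y (s : M) := dist_triangle _ _ _
        have h3 : K * dist x (s : M) ≤ K * (dist x y + dist y (s : M)) :=
          mul_le_mul_of_nonneg_left h2 hK
        linarith
      linarith
    have hgabs : ∀ x y : M, ∀ ω, |g x ω - g y ω| ≤ K * dist x y := by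
      intro x y ω
      rw [abs_le]
      constructor
      · have := hglip1 y x ω
        rw [dist_comm y x] at this
        linarith
      · have := hglip1 x y ω
        linarith
    have hgS : ∀ s : S, ∀ ω, g (s : M) ω = f s ω := by
      intro s ω
      apply le_antisymm
      · have h1 : g (s : M) ω ≤ f s ω + K * dist (s : M) (s : M) := ciInf_le (hbdd _ ω) s
        simpa using h1
      · refine le_ciInf fun t => ?_
        have := (abs_le.mp (hflip s t ω)).2
        linarith
    have hgmeas : ∀ x, Measurable (g x) := fun x =>
      Measurable.iInf fun s => (hfmeas s).add measurable_const
    have hmem : ∀ x, MemLp (g x) p μ := by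
      intro x
      have h1 : MemLp (f s₀) p μ := (Lp.memLp (T s₀)).ae_eq (hfae s₀).symm
      have h2 : MemLp (fun ω => g x ω - f s₀ ω) p μ := by
        refine MemLp.of_bound ((hgmeas x).sub (hfmeas s₀)).aestronglyMeasurable
          (K * dist x (s₀ : M)) (Filter.Eventually.of_forall fun ω => ?_)
        have h3 := hgabs x (s₀ : M) ω
        rw [hgS s₀ ω] at h3
        simpa [Real.norm_eq_abs] using h3
      have heq : (f s₀ + fun ω => g x ω - f s₀ ω) = g x := by
        funext ω; simp only [Pi.add_apply]; ring
      have := h1.add h2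
      rwa [heq] at this
    refine ⟨fun x => (hmem x).toLp (g x), ?_, ?_⟩
    · intro s
      refine Lp.ext ?_
      refine (hmem (s : M)).coeFn_toLp.trans ?_
      refine (Filter.EventuallyEq.of_eq (funext (hgS s))).trans (hfae s)
    · intro x y
      filter_upwards [(hmem x).coeFn_toLp, (hmem y).coeFn_toLp] with ω hx hy
      rw [hx, hy]
      exact hgabs x y ω
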